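/- arXiv:1201.2441 — 4 statements merged into one kernel-verified Lean document; each statement's English description precedes it below -/
import Mathlib

section
/- Let p be a valuated matroid on E and suppose u ∈ E is never the unique minimum of any circuit of p. Then u belongs to at least one p-minimal basis. (Proof: take a minimal basis B; if u ∉ B, let C = X(B,u) be the fundamental circuit; by hypothesis its minimum is attained at some v ≠ u, and the exchange B∪{u}∖{v} is a basis with p(B∪{u}∖{v}) ≤ p(B), hence also minimal and containing u.) -/
/-- A valuated matroid of rank `n` on a finite ground set `E`:
`p : Finset E → ℝ ∪ {∞}` taking a finite value only on `n`-element subsets (the bases),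
with at least one basis, and satisfying the valuated exchange axiom. -/
structure VMatroid (E : Type*) [DecidableEq E] [Fintype E] where
  n : ℕ
  p : Finset E → WithTop ℝ
  card_eq : ∀ B, p B ≠ ⊤ → B.card = n
  exists_basis : ∃ B, p B ≠ ⊤
  exchange : ∀ ⦃B B' : Finset E⦄, p B ≠ ⊤ → p B' ≠ ⊤ → ∀ u ∈ B \ B',
    ∃ v ∈ B' \ B,
      p ((insert v B).erase u) + p ((insert u B').erase v) ≤ p B + p B'

/-- if `u` is never the unique minimum of any circuit of the valuated matroid
`p` (circuits `X(B,v)_w = p(B∪{v}∖{w}) − p(B)` for bases `B` and `v ∉ B`), then `u` belongs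
to at least one `p`-minimal basis. -/
theorem stmt7 {E : Type*} [DecidableEq E] [Fintype E] (M : VMatroid E) (u : E)
    (h : ∀ (B : Finset E) (v : E), M.p B ≠ ⊤ → v ∉ B →
      M.p ((insert v B).erase u) ≠ ⊤ →
      ∃ w, w ≠ u ∧ M.p ((insert v B).erase w) ≤ M.p ((insert v B).erase u)) :
    ∃ B : Finset E, M.p B ≠ ⊤ ∧ u ∈ B ∧ ∀ B', M.p B ≤ M.p B' := by
  obtain ⟨B₀, hB₀⟩ := M.exists_basis
  obtain ⟨B, -, hmin⟩ := Finset.exists_min_image Finset.univ M.p ⟨B₀, Finset.mem_univ _⟩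
  have hmin' : ∀ B', M.p B ≤ M.p B' := fun B' => hmin B' (Finset.mem_univ _)
  have hB : M.p B ≠ ⊤ := fun ht => hB₀ (top_le_iff.mp (ht ▸ hmin' B₀))
  by_cases hu : u ∈ B
  · exact ⟨B, hB, hu, hmin'⟩
  · have heq : (insert u B).erase u = B := by
      rw [Finset.erase_insert hu]
    obtain ⟨w, hw, hle⟩ := h B u hB hu (by rwa [heq])
    rw [heq] at hle
    refine ⟨(insert u B).erase w, fun ht => hB (top_le_iff.mp (ht ▸ hle)), ?_, fun B' => le_trans hle (hmin' B')⟩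
    exact Finset.mem_erase.mpr ⟨Ne.symm hw, Finset.mem_insert_self u B⟩
end

section
/- Let p be a valuated matroid on E, x ∈ ℝ^E, and suppose u ∈ E is the unique x-minimum of some circuit of p. Define x' by changing only the u-coordinate of x to x'_u = max over circuits C containing u of min_{e ∈ C∖{u}} C^x_e, where each circuit C ∋ u is normalized so that C^x_u = x_u (i.e. C^x_e = p(B∪{u}∖{e}) − p(B) + x_e for a representing basis B ∌ u). Then: (a) x'_u > x_u; (b) u is not the unique x'-minimum of any circuit of p; and (c) for any ε > 0, setting x''_u = x'_u − ε, u is the unique x''-minimum of some circuit. In other words, x'_u is the smallest correction of the u-coordinate making the circuit condition at u hold. -/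
/-- suppose `u` is the unique `x`-minimum of some circuit of the valuated
matroid `p` (circuits through `u` are represented as `X(B,u)` for bases `B ∌ u`, normalised
so that the coordinate at `u` is `x_u`, i.e. `C^x_e = p(B∪{u}∖{e}) − p(B) + x_e`).
Let `t = max_{C ∋ u} min_{e ∈ C∖{u}} C^x_e`.  Then
(a) `x_u < t`; (b) after replacing `x_u` by `t`, `u` is no longer the unique minimum of any
circuit; (c) for every `ε > 0`, replacing `x_u` by `t − ε` leaves `u` the unique minimum of
some circuit.  Thus `t` is the smallest correction of the `u`-coordinate. -/
theorem stmt11 {E : Type*} [DecidableEq E] [Fintype E] (M : VMatroid E) (x : E → ℝ) (u : E)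
    (hu : ∃ B : Finset E, M.p B ≠ ⊤ ∧ u ∉ B ∧ ∀ e, e ≠ u →
      M.p B + ((x u : ℝ) : WithTop ℝ)
        < M.p ((insert u B).erase e) + ((x e : ℝ) : WithTop ℝ))
    (t : ℝ)
    (ht : IsGreatest {r : WithTop ℝ | ∃ B : Finset E, M.p B ≠ ⊤ ∧ u ∉ B ∧
        r = (Finset.univ.erase u).inf
          fun e => M.p ((insert u B).erase e) - M.p B + ((x e : ℝ) : WithTop ℝ)}
      ((t : ℝ) : WithTop ℝ)) :
    x u < t ∧
    (∀ B : Finset E, M.p B ≠ ⊤ → u ∉ B →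
      ∃ e, e ≠ u ∧ M.p ((insert u B).erase e) + ((x e : ℝ) : WithTop ℝ)
        ≤ M.p B + ((t : ℝ) : WithTop ℝ)) ∧
    ∀ ε : ℝ, 0 < ε → ∃ B : Finset E, M.p B ≠ ⊤ ∧ u ∉ B ∧ ∀ e, e ≠ u →
      M.p B + ((t - ε : ℝ) : WithTop ℝ)
        < M.p ((insert u B).erase e) + ((x e : ℝ) : WithTop ℝ) := by
  obtain ⟨htmem, htub⟩ := ht
  obtain ⟨B₀, hB₀, huB₀, hcirc⟩ := hu
  obtain ⟨r₀, hr₀⟩ := WithTop.ne_top_iff_exists.mp hB₀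
  constructor
  · -- part (a)
    have h1 : ((x u : ℝ) : WithTop ℝ) < (Finset.univ.erase u).inf
        (fun e => M.p ((insert u B₀).erase e) - M.p B₀ + ((x e : ℝ) : WithTop ℝ)) := by
      rw [Finset.lt_inf_iff (WithTop.coe_lt_top _)]
      intro e he
      have he' : e ≠ u := (Finset.mem_erase.mp he).1
      have hlt := hcirc e he'
      rcases eq_or_ne (M.p ((insert u B₀).erase e)) ⊤ with h | h
      · simp only [h, ← hr₀]
        exact lt_of_lt_of_le (WithTop.coe_lt_top _) le_top
      · obtain ⟨a, ha⟩ := WithTop.ne_top_iff_exists.mp h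
        rw [← ha, ← hr₀] at hlt ⊢
        rw [← WithTop.coe_add, ← WithTop.coe_add, WithTop.coe_lt_coe] at hlt
        have : ((a : ℝ) : WithTop ℝ) - ((r₀ : ℝ) : WithTop ℝ) + ((x e : ℝ) : WithTop ℝ)
            = (((a - r₀ + x e : ℝ)) : WithTop ℝ) := rfl
        rw [this, WithTop.coe_lt_coe]
        linarith
    have h2 : (Finset.univ.erase u).inf
        (fun e => M.p ((insert u B₀).erase e) - M.p B₀ + ((x e : ℝ) : WithTop ℝ))
        ≤ ((t : ℝ) : WithTop ℝ) := htub ⟨B₀, hB₀, huB₀, rfl⟩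
    exact_mod_cast lt_of_lt_of_le h1 h2
  constructor
  · -- part (b)
    intro B hB huB
    obtain ⟨r, hr⟩ := WithTop.ne_top_iff_exists.mp hB
    have hle : (Finset.univ.erase u).inf
        (fun e => M.p ((insert u B).erase e) - M.p B + ((x e : ℝ) : WithTop ℝ))
        ≤ ((t : ℝ) : WithTop ℝ) := htub ⟨B, hB, huB, rfl⟩
    rcases Finset.eq_empty_or_nonempty (Finset.univ.erase u) with hemp | hne
    · rw [hemp, Finset.inf_empty] at hle
      exact absurd (lt_of_le_of_lt hle (WithTop.coe_lt_top _)) (lt_irrefl _)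
    · obtain ⟨e, he, heq⟩ := Finset.exists_mem_eq_inf _ hne
        (fun e => M.p ((insert u B).erase e) - M.p B + ((x e : ℝ) : WithTop ℝ))
      rw [heq] at hle
      refine ⟨e, (Finset.mem_erase.mp he).1, ?_⟩
      rcases eq_or_ne (M.p ((insert u B).erase e)) ⊤ with h | h
      · rw [h, ← hr] at hle
        exact absurd (lt_of_le_of_lt hle (WithTop.coe_lt_top _)) (lt_irrefl _)
      · obtain ⟨a, ha⟩ := WithTop.ne_top_iff_exists.mp h
        rw [← ha, ← hr] at hle ⊢
        have h1 : ((a : ℝ) : WithTop ℝ) - ((r : ℝ) : WithTop ℝ) + ((x e : ℝ) : WithTop ℝ)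
            = (((a - r + x e : ℝ)) : WithTop ℝ) := rfl
        rw [h1, WithTop.coe_le_coe] at hle
        rw [← WithTop.coe_add, ← WithTop.coe_add, WithTop.coe_le_coe]
        linarith
  · -- part (c)
    intro ε hε
    obtain ⟨B, hB, huB, hEq⟩ := htmem
    obtain ⟨r, hr⟩ := WithTop.ne_top_iff_exists.mp hB
    refine ⟨B, hB, huB, fun e he => ?_⟩
    have hmem : e ∈ Finset.univ.erase u := Finset.mem_erase.mpr ⟨he, Finset.mem_univ e⟩
    have hle : ((t : ℝ) : WithTop ℝ)
        ≤ M.p ((insert u B).erase e) - M.p B + ((x e : ℝ) : WithTop ℝ) := by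
      rw [hEq]
      exact Finset.inf_le hmem
    rcases eq_or_ne (M.p ((insert u B).erase e)) ⊤ with h | h
    · rw [h, ← hr]
      rw [← WithTop.coe_add]
      exact lt_of_lt_of_le (WithTop.coe_lt_top _) le_top
    · obtain ⟨a, ha⟩ := WithTop.ne_top_iff_exists.mp h
      rw [← ha, ← hr] at hle ⊢
      have h1 : ((a : ℝ) : WithTop ℝ) - ((r : ℝ) : WithTop ℝ) + ((x e : ℝ) : WithTop ℝ)
          = (((a - r + x e : ℝ)) : WithTop ℝ) := rfl
      rw [h1, WithTop.coe_le_coe] at hle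
      rw [← WithTop.coe_add, ← WithTop.coe_add, WithTop.coe_lt_coe]
      linarith
end

section
/- Let K = ℂ((z)) with valuation v, V = K^n, and let M = (v_1,…,v_m) span V. For u ∈ ℤ^m let Λ_u = Σ_{i=1}^m 𝒪 z^{−u_i} v_i (a lattice, where 𝒪 = ℂ[[z]]). Let p(ω) = v(det(v_{ω_1},…,v_{ω_n})) be the associated valuated matroid on [m] and π_{L_p} the nearest-point projection onto the tropical linear space L_p. Then π_{L_p}(u) = (v_{Λ_u}(v_1), …, v_{Λ_u}(v_m)), where v_Λ(x) = max{k ∈ ℤ : x ∈ z^k Λ}. Consequently, for u, u' ∈ ℤ^m, Λ_u = Λ_{u'} if and only if π_{L_p}(u) = π_{L_p}(u'). -/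
open scoped Classical

noncomputable section

/-- The variable `z` of `K = ℂ((z))`, viewed in the Laurent series field. -/
def zLS : LaurentSeries ℂ := HahnSeries.ofPowerSeries ℤ ℂ PowerSeries.X

abbrev K := LaurentSeries ℂ

/-! ### Auxiliary scalar lemmas -/

lemma zLS_eq : zLS = HahnSeries.single (1:ℤ) (1:ℂ) := HahnSeries.ofPowerSeries_X

lemma single_ne (k : ℤ) : (HahnSeries.single k (1:ℂ) : K) ≠ 0 :=
  HahnSeries.single_ne_zero one_ne_zero

lemma single_mul (k l : ℤ) :
    (HahnSeries.single k (1:ℂ) : K) * HahnSeries.single l 1 = HahnSeries.single (k+l) 1 := by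
  rw [HahnSeries.single_mul_single, one_mul]

lemma zpow_single : ∀ k : ℤ, zLS ^ k = HahnSeries.single k (1:ℂ) := by
  have hnat : ∀ j : ℕ, zLS ^ j = HahnSeries.single (j:ℤ) (1:ℂ) := by
    intro j; induction j with
    | zero => simp [HahnSeries.single_zero_one]
    | succ j ih => rw [pow_succ, ih, zLS_eq, single_mul]; norm_num
  intro k
  rcases k with j | j
  · simpa using hnat j
  · rw [zpow_negSucc, hnat]
    refine inv_eq_of_mul_eq_one_right ?_
    rw [single_mul]
    have h : ((j+1 : ℕ) : ℤ) + Int.negSucc j = 0 := by rw [Int.negSucc_eq]; push_cast; ring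
    rw [h, HahnSeries.single_zero_one]

lemma order_zpow (k : ℤ) : (zLS ^ k).order = k := by
  rw [zpow_single]; exact HahnSeries.order_single one_ne_zero

lemma zpow_ne (k : ℤ) : zLS ^ k ≠ 0 := by rw [zpow_single]; exact single_ne k

lemma order_mul' {a b : K} (ha : a ≠ 0) (hb : b ≠ 0) : (a*b).order = a.order + b.order :=
  HahnSeries.order_mul ha hb

lemma order_inv' {a : K} (ha : a ≠ 0) : (a⁻¹).order = -a.order := by
  have h1 : a * a⁻¹ = 1 := mul_inv_cancel₀ ha
  have := order_mul' ha (inv_ne_zero ha)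
  rw [h1, HahnSeries.order_one] at this
  omega

lemma my_sign_pow (j : ℕ) : ((-1:K)^j) ≠ 0 ∧ ((-1:K)^j).order = 0 := by
  rcases neg_one_pow_eq_or K j with h | h <;> rw [h]
  · exact ⟨one_ne_zero, HahnSeries.order_one⟩
  · refine ⟨neg_ne_zero.mpr one_ne_zero, ?_⟩
    rw [HahnSeries.order_neg, HahnSeries.order_one]

def ordGe (c : ℤ) (a : K) : Prop := a = 0 ∨ c ≤ a.order

lemma ordGe_zero (c : ℤ) : ordGe c 0 := Or.inl rfl

lemma ordGe_add {c : ℤ} {a b : K} (ha : ordGe c a) (hb : ordGe c b) : ordGe c (a+b) := by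
  rcases ha with rfl | ha
  · simpa using hb
  rcases hb with rfl | hb
  · rw [add_zero]; exact Or.inr ha
  by_cases hab : a + b = 0
  · exact Or.inl hab
  · exact Or.inr (le_trans (le_min ha hb) (HahnSeries.min_order_le_order_add hab))

lemma ordGe_mul {c d : ℤ} {a b : K} (ha : ordGe c a) (hb : ordGe d b) : ordGe (c+d) (a*b) := by
  rcases ha with rfl | ha
  · simp [ordGe_zero]
  rcases hb with rfl | hb
  · simp [ordGe_zero]
  by_cases h0 : a = 0
  · simp [h0, ordGe_zero]
  by_cases h1 : b = 0
  · simp [h1, ordGe_zero]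
  exact Or.inr (by rw [order_mul' h0 h1]; exact add_le_add ha hb)

lemma ordGe_ofPS (b : PowerSeries ℂ) : ordGe 0 (HahnSeries.ofPowerSeries ℤ ℂ b) := by
  by_cases h : (HahnSeries.ofPowerSeries ℤ ℂ b : K) = 0
  · exact Or.inl h
  right
  by_contra hlt
  push_neg at hlt
  have hc : (HahnSeries.ofPowerSeries ℤ ℂ b).coeff (HahnSeries.ofPowerSeries ℤ ℂ b).order ≠ 0 := fun h' => h (HahnSeries.coeff_order_eq_zero.mp h')
  apply hc
  rw [HahnSeries.ofPowerSeries_apply]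
  rw [HahnSeries.embDomain_notin_range]
  simp only [Set.mem_range, RelEmbedding.coe_mk, Function.Embedding.coeFn_mk]
  rintro ⟨m, hm⟩
  rw [← HahnSeries.ofPowerSeries_apply] at hm
  have h0m : (0:ℤ) ≤ Nat.castOrderEmbedding m := Nat.cast_nonneg m
  omega

lemma exists_ofPS {a : K} (h0 : a ≠ 0) (h : 0 ≤ a.order) :
    ∃ b : PowerSeries ℂ, (HahnSeries.ofPowerSeries ℤ ℂ b) = a := by
  refine ⟨PowerSeries.X ^ a.order.toNat * a.powerSeriesPart, ?_⟩
  exact LaurentSeries.X_order_mul_powerSeriesPart (Int.toNat_of_nonneg h)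

lemma smulO {N : ℕ} {Λ : Submodule (PowerSeries ℂ) (Fin N → K)} {a : K} (ha : ordGe 0 a)
    {x : Fin N → K} (hx : x ∈ Λ) : a • x ∈ Λ := by
  by_cases h0 : a = 0
  · rw [h0, zero_smul K x]; exact Λ.zero_mem
  rcases ha with rfl | hord
  · rw [zero_smul K x]; exact Λ.zero_mem
  obtain ⟨b, hb⟩ := exists_ofPS h0 hord
  have heq : a • x = b • x := by
    rw [← hb, ← LaurentSeries.coe_algebraMap]
    exact (algebraMap_smul K b x).symm
  rw [heq]; exact Λ.smul_mem b hx

lemma smul_mem_shift {N : ℕ} {Λ : Submodule (PowerSeries ℂ) (Fin N → K)} {x : Fin N → K} {a b : K}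
    (ha : a ≠ 0) (hab : a.order ≤ b.order) (h : a • x ∈ Λ) : b • x ∈ Λ := by
  by_cases hb : b = 0
  · rw [hb, zero_smul K x]; exact Λ.zero_mem
  have heq : (b * a⁻¹) • (a • x) = b • x := by
    funext c
    simp only [Pi.smul_apply, smul_eq_mul]
    field_simp
  rw [← heq]
  refine smulO ?_ h
  right
  rw [order_mul' hb (inv_ne_zero ha), order_inv' ha]
  omega

/-! ### Pinned definitions -/

/-- The valuated matroid of a spanning family `v_1,…,v_m` of `K^n`:
`p(ω) = v(det(v_{ω_1},…,v_{ω_n}))` (`⊤` if the family indexed by `ω` is not a basis). -/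
def matP (n m : ℕ) (v : Fin m → (Fin n → LaurentSeries ℂ)) (S : Finset (Fin m)) :
    WithTop ℝ :=
  if h : S.card = n then
    if hd : Matrix.det (Matrix.of fun i j => v (S.orderIsoOfFin h j) i) = 0 then ⊤
    else (((Matrix.det (Matrix.of fun i j => v (S.orderIsoOfFin h j) i)).order : ℝ) : WithTop ℝ)
  else ⊤

/-- Membership in the tropical linear space `L_p` of a rank-`n` valuation `p` on `[m]`. -/
def MemLp {m : ℕ} (n : ℕ) (p : Finset (Fin m) → WithTop ℝ) (w : Fin m → WithTop ℝ) : Prop :=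
  ∀ τ : Finset (Fin m), τ.card = n + 1 →
    ∃ i ∈ τ, ∃ j ∈ τ, i ≠ j ∧
      (∀ k ∈ τ, p (τ.erase i) + w i ≤ p (τ.erase k) + w k) ∧
      (∀ k ∈ τ, p (τ.erase j) + w j ≤ p (τ.erase k) + w k)

/-- The lattice `Λ_u = Σ_{i=1}^m 𝒪 z^{−u_i} v_i`. -/
def lat (n m : ℕ) (v : Fin m → (Fin n → LaurentSeries ℂ)) (u : Fin m → ℤ) :
    Submodule (PowerSeries ℂ) (Fin n → LaurentSeries ℂ) :=
  Submodule.span (PowerSeries ℂ) (Set.range fun i => (zLS ^ (-(u i))) • v i)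

/-! ### Determinant layer -/

section Det
variable (n m : ℕ) (v : Fin m → (Fin n → K))

def dmat (f : Fin n → Fin m) : K := Matrix.det (Matrix.of fun c j => v (f j) c)

def dS (σ : Finset (Fin m)) : K :=
  if h : σ.card = n then dmat n m v (fun j => σ.orderIsoOfFin h j) else 0

def ordW (a : K) : WithTop ℝ := if a = 0 then ⊤ else (((a.order : ℝ) : WithTop ℝ))

lemma ordW_neg (a : K) : ordW (-a) = ordW a := by
  unfold ordW
  by_cases h : a = 0
  · simp [h]
  · rw [if_neg h, if_neg (by simpa using h), HahnSeries.order_neg]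

lemma dmat_not_inj (f : Fin n → Fin m) (hf : ¬ Function.Injective f) : dmat n m v f = 0 := by
  rw [Function.not_injective_iff] at hf
  obtain ⟨a, b, hab, hne⟩ := hf
  exact Matrix.det_zero_of_column_eq hne (fun c => by simp [hab])

lemma dmat_perm (f : Fin n → Fin m) (π : Equiv.Perm (Fin n)) :
    dmat n m v (f ∘ π) = ((Equiv.Perm.sign π : ℤ) : K) * dmat n m v f := by
  have h : (Matrix.of fun c j => v ((f ∘ π) j) c)
      = (Matrix.of fun c j => v (f j) c).submatrix id π := by
    ext c j; rfl
  rw [dmat, h, Matrix.det_permute', dmat]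

lemma dmat_eq_dS (f : Fin n → Fin m) (hf : Function.Injective f) :
    (Finset.image f Finset.univ).card = n ∧
    (dmat n m v f = dS n m v (Finset.image f Finset.univ) ∨
     dmat n m v f = - dS n m v (Finset.image f Finset.univ)) := by
  set σ := Finset.image f Finset.univ with hσ
  have hcard : σ.card = n := by
    rw [hσ, Finset.card_image_of_injective _ hf, Finset.card_univ, Fintype.card_fin]
  refine ⟨hcard, ?_⟩
  set g : Fin n → Fin m := fun j => σ.orderIsoOfFin hcard j with hg
  have hmem : ∀ j, f j ∈ σ := fun j => Finset.mem_image_of_mem f (Finset.mem_univ j)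
  set π : Fin n → Fin n := fun j => (σ.orderIsoOfFin hcard).symm ⟨f j, hmem j⟩ with hπ
  have hπinj : Function.Injective π := by
    intro a b hab
    apply hf
    have := congrArg (fun x => ((σ.orderIsoOfFin hcard) x : Fin m)) hab
    simpa [hπ] using this
  have hπbij := (Finite.injective_iff_bijective).mp hπinj
  set πe : Equiv.Perm (Fin n) := Equiv.ofBijective π hπbij with hπe
  have hfg : f = g ∘ πe := by
    funext j
    have : (σ.orderIsoOfFin hcard) ((σ.orderIsoOfFin hcard).symm ⟨f j, hmem j⟩) = ⟨f j, hmem j⟩ :=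
      (σ.orderIsoOfFin hcard).apply_symm_apply _
    simp only [hg, hπe, Equiv.ofBijective_apply, hπ, Function.comp_apply, this]
  have hdS : dS n m v σ = dmat n m v g := by rw [dS, dif_pos hcard]
  rw [hfg, dmat_perm, hdS]
  rcases Int.units_eq_one_or (Equiv.Perm.sign πe) with h | h <;> rw [h] <;> push_cast <;> [left; right] <;> ring

lemma matP_eq (σ : Finset (Fin m)) :
    matP n m v σ = if σ.card = n then ordW (dS n m v σ) else ⊤ := by
  unfold matP dS ordW dmat
  by_cases h : σ.card = n
  · simp only [dif_pos h, if_pos h]; rfl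
  · simp only [dif_neg h, if_neg h]

lemma dS_card {σ : Finset (Fin m)} (h : dS n m v σ ≠ 0) : σ.card = n := by
  by_contra hc
  exact h (by rw [dS, dif_neg hc])

lemma matP_top_iff (σ : Finset (Fin m)) : matP n m v σ = ⊤ ↔ dS n m v σ = 0 := by
  rw [matP_eq]
  by_cases h : σ.card = n
  · rw [if_pos h, ordW]
    by_cases h0 : dS n m v σ = 0
    · simp [h0]
    · simp only [if_neg h0, h0, iff_false]
      exact WithTop.coe_ne_top
  · rw [if_neg h]
    simp only [true_iff]
    rw [dS, dif_neg h]

lemma matP_of_ne {σ : Finset (Fin m)} (h : dS n m v σ ≠ 0) :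
    matP n m v σ = ((((dS n m v σ).order : ℝ) : WithTop ℝ)) := by
  rw [matP_eq, if_pos (dS_card n m v h), ordW, if_neg h]

lemma matP_image (f : Fin n → Fin m) (hf : Function.Injective f) :
    matP n m v (Finset.image f Finset.univ) = ordW (dmat n m v f) := by
  obtain ⟨hcard, hor⟩ := dmat_eq_dS n m v f hf
  rw [matP_eq, if_pos hcard]
  rcases hor with h | h <;> rw [h]
  rw [ordW_neg]

lemma laplace (g : Fin (n+1) → Fin m) :
    ∑ k : Fin (n+1), (((-1:K)^(k:ℕ)) * dmat n m v (g ∘ (Fin.succAbove k))) • v (g k) = 0 := by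
  funext c
  rw [Finset.sum_apply]
  set B : Matrix (Fin (n+1)) (Fin (n+1)) K :=
    Matrix.of (fun k j => Fin.cases (v (g k) c) (fun j' => v (g k) j') j) with hB
  have hdet : B.det = 0 := by
    refine Matrix.det_zero_of_column_eq (i := 0) (j := c.succ) (Fin.succ_ne_zero c).symm ?_
    intro k
    simp [hB]
  have hexp := Matrix.det_succ_column_zero B
  rw [hdet] at hexp
  have hsub : ∀ k : Fin (n+1), (B.submatrix k.succAbove Fin.succ).det = dmat n m v (g ∘ (Fin.succAbove k)) := by
    intro k
    rw [dmat, ← Matrix.det_transpose]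
    congr 1
  have key : ∀ k : Fin (n+1), ((((-1:K)^(k:ℕ)) * dmat n m v (g ∘ (Fin.succAbove k))) • v (g k)) c
      = (-1)^(k:ℕ) * B k 0 * (B.submatrix k.succAbove Fin.succ).det := by
    intro k
    rw [hsub]
    simp only [Pi.smul_apply, smul_eq_mul, hB, Matrix.of_apply, Fin.cases_zero]
    ring
  rw [Finset.sum_congr rfl (fun k _ => key k)]
  exact hexp.symm

end Det

/-! ### Enumeration helpers -/

section Enum
variable {m N : ℕ} (σ : Finset (Fin m)) (h : σ.card = N)

def enumF : Fin N → Fin m := fun j => (σ.orderIsoOfFin h j : Fin m)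

lemma enumF_strictMono : StrictMono (enumF σ h) := by
  have : enumF σ h = σ.orderEmbOfFin h := by
    funext j; exact σ.coe_orderIsoOfFin_apply h j
  rw [this]; exact (σ.orderEmbOfFin h).strictMono

lemma enumF_inj : Function.Injective (enumF σ h) := (enumF_strictMono σ h).injective

lemma enumF_mem (j : Fin N) : enumF σ h j ∈ σ := (σ.orderIsoOfFin h j).2

lemma enumF_surj {x : Fin m} (hx : x ∈ σ) : ∃ j, enumF σ h j = x :=
  ⟨(σ.orderIsoOfFin h).symm ⟨x, hx⟩, by
    simp only [enumF]
    rw [(σ.orderIsoOfFin h).apply_symm_apply]⟩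

lemma enumF_image : Finset.image (enumF σ h) Finset.univ = σ := by
  ext x
  simp only [Finset.mem_image, Finset.mem_univ, true_and]
  constructor
  · rintro ⟨j, rfl⟩; exact enumF_mem σ h j
  · exact enumF_surj σ h

end Enum

lemma dS_eq {m n : ℕ} (v : Fin m → (Fin n → K)) (σ : Finset (Fin m)) (h : σ.card = n) :
    dS n m v σ = dmat n m v (enumF σ h) := by
  rw [dS, dif_pos h]; rfl

lemma image_succAbove {m n : ℕ} (τ : Finset (Fin m)) (hτ : τ.card = n + 1) (k : Fin (n+1)) :
    Finset.image ((enumF τ hτ) ∘ k.succAbove) Finset.univ = τ.erase (enumF τ hτ k) := by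
  ext x
  simp only [Finset.mem_image, Finset.mem_univ, true_and, Finset.mem_erase, Function.comp_apply]
  constructor
  · rintro ⟨j, rfl⟩
    exact ⟨fun hx => (Fin.succAbove_ne k j) (enumF_inj τ hτ hx), enumF_mem τ hτ _⟩
  · rintro ⟨hne, hx⟩
    obtain ⟨j2, hj2⟩ := enumF_surj τ hτ hx
    have hj2k : j2 ≠ k := fun hh => hne (by rw [← hj2, hh])
    obtain ⟨j', hj'⟩ := Fin.exists_succAbove_eq hj2k
    exact ⟨j', by rw [hj', hj2]⟩

lemma image_update {m N : ℕ} {g : Fin N → Fin m} (hg : Function.Injective g) (t : Fin N) (l : Fin m) :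
    Finset.image (Function.update g t l) Finset.univ
      = insert l ((Finset.image g Finset.univ).erase (g t)) := by
  ext x
  simp only [Finset.mem_image, Finset.mem_univ, true_and, Finset.mem_insert, Finset.mem_erase]
  constructor
  · rintro ⟨j, rfl⟩
    by_cases hj : j = t
    · subst hj; left; rw [Function.update_self]
    · right
      rw [Function.update_of_ne hj]
      exact ⟨fun hh => hj (hg hh), ⟨j, rfl⟩⟩
  · rintro (rfl | ⟨hne, j, rfl⟩)
    · exact ⟨t, Function.update_self _ _ _⟩
    · have hj : j ≠ t := fun hh => hne (by rw [hh])
      exact ⟨j, Function.update_of_ne hj _ _⟩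

/-! ### The column-replacement functional -/

section Phi
variable (n m : ℕ) (v : Fin m → (Fin n → K))

def phiF (g : Fin n → Fin m) (t : Fin n) (x : Fin n → K) : K :=
  ((Matrix.of fun c j => v (g j) c).updateCol t x).det

lemma phiF_add (g : Fin n → Fin m) (t : Fin n) (x y : Fin n → K) :
    phiF n m v g t (x + y) = phiF n m v g t x + phiF n m v g t y :=
  Matrix.det_updateCol_add _ _ _ _

lemma phiF_smul (g : Fin n → Fin m) (t : Fin n) (a : K) (x : Fin n → K) :
    phiF n m v g t (a • x) = a * phiF n m v g t x :=
  Matrix.det_updateCol_smul _ _ _ _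

lemma phiF_zero (g : Fin n → Fin m) (t : Fin n) : phiF n m v g t 0 = 0 := by
  simpa using phiF_smul n m v g t 0 0

lemma phiF_col (g : Fin n → Fin m) (t : Fin n) (l : Fin m) :
    phiF n m v g t (v l) = dmat n m v (Function.update g t l) := by
  rw [phiF, dmat]
  congr 1
  ext c j
  by_cases hj : j = t
  · subst hj; simp [Matrix.updateCol_self]
  · simp [Matrix.updateCol_ne hj, Function.update_of_ne hj]

lemma phiF_mem (u : Fin m → ℤ) (g : Fin n → Fin m) (t : Fin n) (c : ℤ)
    (h : ∀ l : Fin m, ordGe c (zLS ^ (-(u l)) * phiF n m v g t (v l)))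
    {x : Fin n → K} (hx : x ∈ lat n m v u) : ordGe c (phiF n m v g t x) := by
  induction hx using Submodule.span_induction with
  | mem x hx =>
      obtain ⟨l, rfl⟩ := hx
      rw [phiF_smul]
      exact h l
  | zero => rw [phiF_zero]; exact ordGe_zero c
  | add x y hx hy ihx ihy => rw [phiF_add]; exact ordGe_add ihx ihy
  | smul a x hx ih =>
      have h1 : a • x = (HahnSeries.ofPowerSeries ℤ ℂ a) • x := by
        rw [← LaurentSeries.coe_algebraMap]
        exact (algebraMap_smul K a x).symm
      rw [h1, phiF_smul]
      simpa using ordGe_mul (c := 0) (d := c) (ordGe_ofPS a) ih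

end Phi

/-! ### Existence of a basis -/

lemma exists_dS_ne (n m : ℕ) (v : Fin m → (Fin n → K))
    (hspan : Submodule.span K (Set.range v) = ⊤) :
    ∃ σ : Finset (Fin m), dS n m v σ ≠ 0 := by
  obtain ⟨b, hsub, hspan2, hli⟩ := exists_linearIndependent K (Set.range v)
  rw [hspan] at hspan2
  have hB : Module.Basis b K (Fin n → K) := Module.Basis.mk hli (by rw [Subtype.range_coe, hspan2])
  haveI : Fintype b := FiniteDimensional.fintypeBasisIndex hB
  have hcardb : Fintype.card b = n := by
    have h1 := Module.finrank_eq_card_basis hB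
    rw [Module.finrank_pi K] at h1
    simp only [Fintype.card_fin] at h1
    omega
  set es : Fin n ≃ b := (Fintype.equivFinOfCardEq hcardb).symm with hes
  have hch : ∀ j : Fin n, ∃ l : Fin m, v l = (es j : Fin n → K) := fun j => hsub (es j).2
  choose f hf using hch
  have hinjf : Function.Injective f := by
    intro a b hab
    have : ((es a : Fin n → K)) = ((es b : Fin n → K)) := by rw [← hf a, ← hf b, hab]
    exact es.injective (Subtype.ext this)
  have hfam : (fun j => v (f j)) = (fun j => ((es j : Fin n → K))) := funext hf
  have hli2 : LinearIndependent K (fun j => v (f j)) := by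
    rw [hfam]
    exact hli.comp es es.injective
  have hspan3 : Submodule.span K (Set.range fun j => v (f j)) = ⊤ := by
    rw [hfam]
    have h3 : Set.range (fun j => ((es j : Fin n → K))) = b :=
      (es.surjective.range_comp _).trans Subtype.range_coe
    rw [h3, hspan2]
  have hunit := (Module.Basis.is_basis_iff_det (Pi.basisFun K (Fin n))).mp ⟨hli2, hspan3⟩
  have hdet : dmat n m v f ≠ 0 := by
    intro h0
    apply hunit.ne_zero
    rw [Module.Basis.det_apply]
    rw [← h0, dmat]
    congr 1
  obtain ⟨hcard, hor⟩ := dmat_eq_dS n m v f hinjf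
  refine ⟨Finset.image f Finset.univ, ?_⟩
  intro h0
  rcases hor with h | h <;> rw [h0] at h
  · exact hdet h
  · rw [neg_zero] at h; exact hdet h

/-! ### `Λ_u = Λ_w` -/

lemma lat_eq_w (n m : ℕ) (v : Fin m → (Fin n → K)) (u w : Fin m → ℤ)
    (hw : ∀ i, IsGreatest {k : ℤ | (zLS ^ (-k)) • v i ∈ lat n m v u} (w i)) :
    lat n m v u = lat n m v w := by
  have huw : ∀ i, u i ≤ w i := by
    intro i
    exact (hw i).2 (Submodule.subset_span (Set.mem_range_self i))
  apply le_antisymm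
  · rw [lat, Submodule.span_le]
    rintro x ⟨i, rfl⟩
    refine smul_mem_shift (a := zLS ^ (-(w i))) (zpow_ne _) ?_
      (Submodule.subset_span (Set.mem_range_self i))
    rw [order_zpow, order_zpow]
    have := huw i
    omega
  · rw [lat, Submodule.span_le]
    rintro x ⟨i, rfl⟩
    exact (hw i).1


lemma part1 (n m : ℕ) (v : Fin m → (Fin n → K)) (u w : Fin m → ℤ)
    (hw : ∀ i, IsGreatest {k : ℤ | (zLS ^ (-k)) • v i ∈ lat n m v u} (w i)) :
    MemLp n (matP n m v) (fun i => ((w i : ℝ) : WithTop ℝ)) := by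
  intro τ hτ
  have hτne : τ.Nonempty := by rw [← Finset.card_pos, hτ]; omega
  rcases Nat.eq_zero_or_pos n with hn | hn
  · obtain ⟨i0, hi0⟩ := hτne
    exfalso
    have hv0 : v i0 = 0 := by subst hn; exact funext fun x => x.elim0
    have hmem : zLS ^ (-(w i0 + 1)) • v i0 ∈ lat n m v u := by
      rw [hv0, smul_zero]; exact Submodule.zero_mem _
    have := (hw i0).2 hmem
    omega
  set g : Fin (n+1) → Fin m := enumF τ hτ with hg
  have hginj : Function.Injective g := enumF_inj τ hτ
  set d : Fin (n+1) → K := fun k => dmat n m v (g ∘ (Fin.succAbove k)) with hd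
  have hterm : ∀ k, matP n m v (τ.erase (g k)) = ordW (d k) := by
    intro k
    rw [← image_succAbove τ hτ k]
    exact matP_image n m v _ ((enumF_strictMono τ hτ).comp (Fin.strictMono_succAbove k)).injective
  have hsurj : ∀ x ∈ τ, ∃ k, g k = x := fun x hx => enumF_surj τ hτ hx
  set F : Finset (Fin (n+1)) := Finset.univ.filter (fun k => d k ≠ 0) with hF
  have horder : ∀ (e : ℤ) (j : ℕ) (a : K), a ≠ 0 → (zLS ^ e * ((-1:K)^j * a)).order = e + a.order := by
    intro e j a ha
    rw [order_mul' (zpow_ne e) (mul_ne_zero (my_sign_pow j).1 ha),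
        order_mul' (my_sign_pow j).1 ha, (my_sign_pow j).2, order_zpow]
    ring
  by_cases hFne : F.Nonempty
  · obtain ⟨k0, hk0F, hk0min⟩ := F.exists_min_image (fun k => (d k).order + w (g k)) hFne
    have hd0 : d k0 ≠ 0 := (Finset.mem_filter.mp hk0F).2
    set A : ℤ := (d k0).order + w (g k0) with hA
    have hsecond : ∃ k1, k1 ≠ k0 ∧ d k1 ≠ 0 ∧ (d k1).order + w (g k1) ≤ A := by
      by_contra hcon
      push_neg at hcon
      have hstrict : ∀ k, k ≠ k0 → d k ≠ 0 → A + 1 ≤ (d k).order + w (g k) := by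
        intro k hk hdk
        have := hcon k hk hdk
        omega
      have hids := laplace n m v g
      set T : Fin (n+1) → (Fin n → K) :=
        fun k => (zLS ^ (-(A+1)) * ((-1:K)^((k:ℕ)) * d k)) • v (g k) with hT
      have hTsum : ∑ k : Fin (n+1), T k = 0 := by
        have hTk : ∀ k, T k = zLS ^ (-(A+1)) • ((((-1:K)^((k:ℕ)) * d k)) • v (g k)) :=
          fun k => mul_smul (zLS ^ (-(A+1))) ((-1:K)^((k:ℕ)) * d k) (v (g k))
        rw [Finset.sum_congr rfl (fun k _ => hTk k), ← Finset.smul_sum, hids, smul_zero]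
      have hTk0 : T k0 = - ∑ k ∈ Finset.univ.erase k0, T k := by
        have h1 := Finset.sum_erase_add Finset.univ T (Finset.mem_univ k0)
        rw [hTsum] at h1
        exact eq_neg_of_add_eq_zero_right h1
      have hmem : (zLS ^ (-(A+1)) * ((-1:K)^((k0:ℕ)) * d k0)) • v (g k0) ∈ lat n m v u := by
        show T k0 ∈ lat n m v u
        rw [hTk0]
        refine Submodule.neg_mem _ (Submodule.sum_mem _ ?_)
        intro k hk
        show (zLS ^ (-(A+1)) * ((-1:K)^((k:ℕ)) * d k)) • v (g k) ∈ lat n m v u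
        by_cases hdk : d k = 0
        · rw [hdk, mul_zero, mul_zero, zero_smul K (v (g k))]; exact Submodule.zero_mem _
        · refine smul_mem_shift (a := zLS ^ (-(w (g k)))) (zpow_ne _) ?_ (hw (g k)).1
          rw [order_zpow, horder _ _ _ hdk]
          have := hstrict k (Finset.ne_of_mem_erase hk) hdk
          omega
      have hfin : zLS ^ (-(w (g k0) + 1)) • v (g k0) ∈ lat n m v u := by
        refine smul_mem_shift
          (a := zLS ^ (-(A+1)) * ((-1:K)^((k0:ℕ)) * d k0))
          (mul_ne_zero (zpow_ne _) (mul_ne_zero (my_sign_pow _).1 hd0)) ?_ hmem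
        rw [order_zpow, horder _ _ _ hd0]
        omega
      exact absurd ((hw (g k0)).2 hfin) (by omega)
    obtain ⟨k1, hk1ne, hd1, hk1le⟩ := hsecond
    have hmain : ∀ kk : Fin (n+1), d kk ≠ 0 → ((d kk).order + w (g kk) ≤ A) →
        ∀ x ∈ τ, matP n m v (τ.erase (g kk)) + ((w (g kk) : ℝ) : WithTop ℝ)
          ≤ matP n m v (τ.erase x) + ((w x : ℝ) : WithTop ℝ) := by
      intro kk hdkk hle x hx
      obtain ⟨k2, rfl⟩ := hsurj x hx
      rw [hterm kk, hterm k2, ordW, if_neg hdkk]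
      by_cases hdk2 : d k2 = 0
      · rw [ordW, if_pos hdk2, top_add]; exact le_top
      · rw [ordW, if_neg hdk2]
        have hmin2 := hk0min k2 (Finset.mem_filter.mpr ⟨Finset.mem_univ k2, hdk2⟩)
        have hints : (d kk).order + w (g kk) ≤ (d k2).order + w (g k2) := by omega
        rw [← WithTop.coe_add, ← WithTop.coe_add, WithTop.coe_le_coe]
        exact_mod_cast hints
    refine ⟨g k0, enumF_mem τ hτ k0, g k1, enumF_mem τ hτ k1,
      fun hh => hk1ne (hginj hh).symm, ?_, ?_⟩
    · exact fun x hx => hmain k0 hd0 (le_of_eq rfl) x hx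
    · exact fun x hx => hmain k1 hd1 hk1le x hx
  · have hall : ∀ x ∈ τ, matP n m v (τ.erase x) = ⊤ := by
      intro x hx
      obtain ⟨k, rfl⟩ := hsurj x hx
      rw [hterm k]
      have hdk : d k = 0 := by
        by_contra hne
        exact hFne ⟨k, Finset.mem_filter.mpr ⟨Finset.mem_univ k, hne⟩⟩
      rw [hdk, ordW, if_pos rfl]
    obtain ⟨i, hi, j, hj, hij⟩ := Finset.one_lt_card.mp (by omega : 1 < τ.card)
    refine ⟨i, hi, j, hj, hij, ?_, ?_⟩ <;> intro k hk <;>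
      rw [hall _ hk] <;> [rw [hall _ hi]; rw [hall _ hj]] <;>
      rw [top_add] <;> exact le_top


lemma part3 (n m : ℕ) (v : Fin m → (Fin n → K)) (u w : Fin m → ℤ)
    (hspan : Submodule.span K (Set.range v) = ⊤)
    (hw : ∀ i, IsGreatest {k : ℤ | (zLS ^ (-k)) • v i ∈ lat n m v u} (w i))
    (w' : Fin m → WithTop ℝ) (hLp : MemLp n (matP n m v) w')
    (hw'u : ∀ i, (((u i : ℝ)) : WithTop ℝ) ≤ w' i) (i : Fin m) :
    ((w i : ℝ) : WithTop ℝ) ≤ w' i := by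
  by_cases htop : w' i = ⊤
  · rw [htop]; exact le_top
  obtain ⟨r, hr⟩ := WithTop.ne_top_iff_exists.mp htop
  set ww : Fin m → ℝ := fun l => max ((u l : ℝ)) ((w' l).untopD 0) with hww
  have hwwu : ∀ l, ((u l : ℝ)) ≤ ww l := fun l => le_max_left _ _
  have hwweq : ∀ l (s : ℝ), w' l = (s : WithTop ℝ) → ww l = s := by
    intro l s hs
    have h1 : ((u l : ℝ) : WithTop ℝ) ≤ (s : WithTop ℝ) := by rw [← hs]; exact hw'u l
    have h2 : ((u l : ℝ)) ≤ s := WithTop.coe_le_coe.mp h1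
    rw [hww]
    simp only [hs, WithTop.untopD_coe]
    exact max_eq_right h2
  have hwwi : ww i = r := hwweq i r hr.symm
  set G : Finset (Fin m) → ℝ := fun σ => (((dS n m v σ).order : ℝ)) - ∑ l ∈ σ, ww l with hG
  set Bas : Finset (Finset (Fin m)) := Finset.univ.filter (fun σ => dS n m v σ ≠ 0) with hBas
  have hBasne : Bas.Nonempty := by
    obtain ⟨σ0, h0⟩ := exists_dS_ne n m v hspan
    exact ⟨σ0, Finset.mem_filter.mpr ⟨Finset.mem_univ _, h0⟩⟩
  have hkey : ∃ σ ∈ Bas, (∀ σ' ∈ Bas, G σ ≤ G σ') ∧ i ∈ σ := by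
    obtain ⟨σ1, hσ1B, hσ1min⟩ := Bas.exists_min_image G hBasne
    by_cases hi : i ∈ σ1
    · exact ⟨σ1, hσ1B, hσ1min, hi⟩
    have hds1 : dS n m v σ1 ≠ 0 := (Finset.mem_filter.mp hσ1B).2
    have hc1 : σ1.card = n := dS_card n m v hds1
    set τ : Finset (Fin m) := insert i σ1 with hτdef
    have hτ : τ.card = n + 1 := by rw [hτdef, Finset.card_insert_of_notMem hi, hc1]
    have herase_i : τ.erase i = σ1 := Finset.erase_insert hi
    have hq1 : matP n m v σ1 = (((dS n m v σ1).order : ℝ) : WithTop ℝ) := matP_of_ne n m v hds1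
    have herase_k : ∀ k, k ≠ i → τ.erase k = insert i (σ1.erase k) := by
      intro k hki
      rw [hτdef, Finset.erase_insert_of_ne (fun hh => hki hh.symm)]
    have hmin_i : ∀ k ∈ τ, matP n m v (τ.erase i) + w' i ≤ matP n m v (τ.erase k) + w' k := by
      intro k hk
      by_cases hki : k = i
      · subst hki; exact le_refl _
      have hkσ1 : k ∈ σ1 := by
        rcases Finset.mem_insert.mp hk with h | h
        · exact absurd h hki
        · exact h
      by_cases htopk : matP n m v (τ.erase k) = ⊤
      · rw [htopk, top_add]; exact le_top
      by_cases htopw : w' k = ⊤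
      · rw [htopw, add_top]; exact le_top
      obtain ⟨s, hs⟩ := WithTop.ne_top_iff_exists.mp htopw
      have hdsk : dS n m v (τ.erase k) ≠ 0 := fun hh => htopk ((matP_top_iff n m v _).mpr hh)
      have hmk : matP n m v (τ.erase k) = (((dS n m v (τ.erase k)).order : ℝ) : WithTop ℝ) :=
        matP_of_ne n m v hdsk
      have hBk : τ.erase k ∈ Bas := Finset.mem_filter.mpr ⟨Finset.mem_univ _, hdsk⟩
      have hGk := hσ1min _ hBk
      have hsum : ∑ l ∈ τ.erase k, ww l = ww i + (∑ l ∈ σ1, ww l - ww k) := by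
        rw [herase_k k hki, Finset.sum_insert (fun hh => hi (Finset.mem_of_mem_erase hh))]
        have := Finset.sum_erase_add σ1 ww hkσ1
        linarith
      have hreal : ((dS n m v σ1).order : ℝ) + ww i ≤ ((dS n m v (τ.erase k)).order : ℝ) + ww k := by
        rw [hG] at hGk
        simp only at hGk
        rw [hsum] at hGk
        linarith
      rw [herase_i, hq1, hmk, ← hr, ← hs, ← WithTop.coe_add, ← WithTop.coe_add, WithTop.coe_le_coe]
      have hwws : ww k = s := hwweq k s hs.symm
      rw [hwwi] at hreal
      rw [hwws] at hreal
      linarith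
    obtain ⟨a, ha, b, hb, hab, hA, hB⟩ := hLp τ hτ
    obtain ⟨k0, hk0τ, hk0i, hallk0⟩ : ∃ k0 ∈ τ, k0 ≠ i ∧
        ∀ k ∈ τ, matP n m v (τ.erase k0) + w' k0 ≤ matP n m v (τ.erase k) + w' k := by
      by_cases hai : a = i
      · refine ⟨b, hb, ?_, hB⟩
        rw [← hai]; exact fun hh => hab hh.symm
      · exact ⟨a, ha, hai, hA⟩
    have hk0σ1 : k0 ∈ σ1 := by
      rcases Finset.mem_insert.mp hk0τ with h | h
      · exact absurd h hk0i
      · exact h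
    have heq : matP n m v (τ.erase k0) + w' k0 = matP n m v σ1 + w' i := by
      refine le_antisymm ?_ ?_
      · have := hallk0 i (Finset.mem_insert_self i σ1)
        rw [herase_i] at this
        exact this
      · have := hmin_i k0 hk0τ
        rw [herase_i] at this
        exact this
    have hfin : matP n m v σ1 + w' i = ((((dS n m v σ1).order : ℝ) + r : ℝ) : WithTop ℝ) := by
      rw [hq1, ← hr, WithTop.coe_add]
    have hk0top : matP n m v (τ.erase k0) ≠ ⊤ := by
      intro hh
      rw [hh, top_add, hfin] at heq
      exact WithTop.top_ne_coe heq
    have hw'k0top : w' k0 ≠ ⊤ := by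
      intro hh
      rw [hh, add_top, hfin] at heq
      exact WithTop.top_ne_coe heq
    obtain ⟨s, hs⟩ := WithTop.ne_top_iff_exists.mp hw'k0top
    have hdsk0 : dS n m v (τ.erase k0) ≠ 0 := fun hh => hk0top ((matP_top_iff n m v _).mpr hh)
    have hmk0 : matP n m v (τ.erase k0) = (((dS n m v (τ.erase k0)).order : ℝ) : WithTop ℝ) :=
      matP_of_ne n m v hdsk0
    have hwws : ww k0 = s := hwweq k0 s hs.symm
    have hrealeq : ((dS n m v (τ.erase k0)).order : ℝ) + s = ((dS n m v σ1).order : ℝ) + r := by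
      rw [hmk0, ← hs, hfin, ← WithTop.coe_add] at heq
      exact_mod_cast heq
    have hsum : ∑ l ∈ τ.erase k0, ww l = ww i + (∑ l ∈ σ1, ww l - ww k0) := by
      rw [herase_k k0 hk0i, Finset.sum_insert (fun hh => hi (Finset.mem_of_mem_erase hh))]
      have := Finset.sum_erase_add σ1 ww hk0σ1
      linarith
    have hGeq : G (τ.erase k0) = G σ1 := by
      rw [hG]
      simp only
      rw [hsum, hwws, hwwi]
      linarith
    refine ⟨τ.erase k0, Finset.mem_filter.mpr ⟨Finset.mem_univ _, hdsk0⟩, ?_, ?_⟩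
    · intro σ' hσ'
      rw [hGeq]
      exact hσ1min σ' hσ'
    · rw [herase_k k0 hk0i]
      exact Finset.mem_insert_self i _
  obtain ⟨σs, hσB, hσmin, hiσ⟩ := hkey
  have hds : dS n m v σs ≠ 0 := (Finset.mem_filter.mp hσB).2
  have hcard : σs.card = n := dS_card n m v hds
  set g : Fin n → Fin m := enumF σs hcard with hgdef
  have hginj : Function.Injective g := enumF_inj σs hcard
  have himg : Finset.image g Finset.univ = σs := enumF_image σs hcard
  obtain ⟨t, hgt⟩ := enumF_surj σs hcard hiσ
  rw [← hgdef] at hgt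
  set q : ℝ := ((dS n m v σs).order : ℝ) with hq
  set c : ℤ := Int.ceil (q - r) with hc
  have hgen : ∀ l, ordGe c (zLS ^ (-(u l)) * phiF n m v g t (v l)) := by
    intro l
    rw [phiF_col]
    by_cases hDl : dmat n m v (Function.update g t l) = 0
    · rw [hDl, mul_zero]; exact ordGe_zero c
    have hinj2 : Function.Injective (Function.update g t l) := by
      by_contra hni; exact hDl (dmat_not_inj n m v _ hni)
    set σl : Finset (Fin m) := Finset.image (Function.update g t l) Finset.univ with hσl
    have himgl : σl = insert l (σs.erase (g t)) := by rw [hσl, image_update hginj, himg]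
    have hmPl : matP n m v σl = ordW (dmat n m v (Function.update g t l)) :=
      matP_image n m v _ hinj2
    have hdsl : dS n m v σl ≠ 0 := by
      intro hh
      rw [(matP_top_iff n m v σl).mpr hh, ordW, if_neg hDl] at hmPl
      exact WithTop.top_ne_coe hmPl
    have hordeq : (dmat n m v (Function.update g t l)).order = (dS n m v σl).order := by
      rw [matP_of_ne n m v hdsl, ordW, if_neg hDl] at hmPl
      have := WithTop.coe_inj.mp hmPl
      exact_mod_cast this.symm
    have hBl : σl ∈ Bas := Finset.mem_filter.mpr ⟨Finset.mem_univ _, hdsl⟩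
    have hGl := hσmin σl hBl
    have hgtσ : g t ∈ σs := by rw [hgt]; exact hiσ
    have hlnot : l ∉ σs.erase (g t) := by
      intro hh
      obtain ⟨s', hs'⟩ := enumF_surj σs hcard (Finset.mem_of_mem_erase hh)
      rw [← hgdef] at hs'
      have hst : s' ≠ t := by
        intro hcontra
        rw [hcontra] at hs'
        exact (Finset.mem_erase.mp hh).1 hs'.symm
      have hupd : Function.update g t l s' = Function.update g t l t := by
        rw [Function.update_self, Function.update_of_ne hst, hs']
      exact hst (hinj2 hupd)
    have hsuml : ∑ l' ∈ σl, ww l' = ww l + (∑ l' ∈ σs, ww l' - ww (g t)) := by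
      rw [himgl, Finset.sum_insert hlnot]
      have := Finset.sum_erase_add σs ww hgtσ
      linarith
    have hreal : q - r ≤ ((dS n m v σl).order : ℝ) - ww l := by
      rw [hG] at hGl
      simp only at hGl
      rw [hsuml] at hGl
      have hwwgt : ww (g t) = r := by rw [hgt, hwwi]
      rw [hwwgt] at hGl
      linarith
    right
    rw [order_mul' (zpow_ne _) hDl, order_zpow, hordeq]
    rw [hc]
    rw [Int.ceil_le]
    push_cast
    have := hwwu l
    linarith
  have hx := (hw i).1
  have hb := phiF_mem n m v u g t c hgen hx
  have hupdate : Function.update g t i = g := by rw [← hgt]; exact Function.update_eq_self t g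
  have hphiv : phiF n m v g t (v i) = dS n m v σs := by
    rw [phiF_col, hupdate, dS_eq v σs hcard]
  rw [phiF_smul, hphiv] at hb
  rcases hb with h0 | hord
  · exact absurd h0 (mul_ne_zero (zpow_ne _) hds)
  · rw [order_mul' (zpow_ne _) hds, order_zpow] at hord
    have hceil : q - r ≤ (c : ℝ) := Int.le_ceil _
    have hcast : (c : ℝ) ≤ (-(w i) : ℤ) + ((dS n m v σs).order : ℝ) := by exact_mod_cast hord
    have hfinal : (w i : ℝ) ≤ r := by push_cast at hcast; linarith
    rw [← hr, WithTop.coe_le_coe]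
    exact_mod_cast hfinal

/-! ### Main theorem -/

/-- Keel–Tevelev, as in the paper: let `v_1,…,v_m` span `K^n` and
`Λ_u = Σ 𝒪 z^{−u_i}v_i`.  If `w_i = v_{Λ_u}(v_i) = max{k : v_i ∈ z^kΛ_u}`, then `w` is
exactly the nearest-point tropical projection `π_{L_p}(u) = min{w ∈ L_p : w ≥ u}` of `u`
onto the tropical linear space of `p(ω) = v(det M_ω)`; consequently `Λ_u = Λ_{u'}` iff
`π_{L_p}(u) = π_{L_p}(u')`. -/
theorem stmt12 (n m : ℕ) (v : Fin m → (Fin n → LaurentSeries ℂ))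
    (hspan : Submodule.span (LaurentSeries ℂ) (Set.range v) = ⊤)
    (u : Fin m → ℤ) (w : Fin m → ℤ)
    (hw : ∀ i, IsGreatest {k : ℤ | (zLS ^ (-k)) • v i ∈ lat n m v u} (w i)) :
    (MemLp n (matP n m v) fun i => ((w i : ℝ) : WithTop ℝ)) ∧
    (∀ i, (((u i : ℝ)) : WithTop ℝ) ≤ ((w i : ℝ) : WithTop ℝ)) ∧
    (∀ w' : Fin m → WithTop ℝ, MemLp n (matP n m v) w' →
      (∀ i, (((u i : ℝ)) : WithTop ℝ) ≤ w' i) → ∀ i, ((w i : ℝ) : WithTop ℝ) ≤ w' i) ∧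
    (∀ (u' w' : Fin m → ℤ),
      (∀ i, IsGreatest {k : ℤ | (zLS ^ (-k)) • v i ∈ lat n m v u'} (w' i)) →
      (lat n m v u = lat n m v u' ↔ w = w')) := by
  have huw : ∀ i, u i ≤ w i := by
    intro i
    exact (hw i).2 (Submodule.subset_span (Set.mem_range_self i))
  refine ⟨?_, ?_, ?_, ?_⟩
  · -- Part 1 : w ∈ L_p
    exact part1 n m v u w hw
  · -- Part 2 : u ≤ w
    intro i
    rw [WithTop.coe_le_coe]
    exact_mod_cast huw i
  · -- Part 3 : minimality
    intro w' hLp hw'u i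
    exact part3 n m v u w hspan hw w' hLp hw'u i
  · -- Part 4
    intro u' w' hw'
    constructor
    · intro h
      funext i
      refine (hw i).unique ?_
      have := hw' i
      rw [← h] at this
      exact this
    · intro h
      rw [lat_eq_w n m v u w hw, lat_eq_w n m v u' w' hw', h]

end
end

section
/- Let V be a finite-dimensional K-vector space (K = ℂ((z))), ∇ a connection, D = ∇ contracted with z d/dz, and ∇_k contracted with z^{k+1} d/dz. Let Λ be a lattice with basis (e_1,…,e_n). For k ≥ 0 and ℓ ≥ 0 define F^ℓ_k(Λ) = Λ + ∇_kΛ + ⋯ + ∇_k^ℓ Λ. Then F^ℓ_k(Λ) equals the 𝒪-module generated by the vectors z^{−(−jk)}-twisted iterates { z^{jk} D^j e_i : 1 ≤ i ≤ n, 0 ≤ j ≤ ℓ }; that is, F^ℓ_k(Λ) = Σ_{i=1}^n Σ_{j=0}^ℓ 𝒪 · z^{jk} D^j(e_i). -/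
/-- with `K = ℂ((z))`, `𝒪 = ℂ[[z]]`, a connection operator `D = ∇_{z d/dz}`
on a `K`-vector space `V` (so `D(f•v) = θ(f)•v + f•D(v)` where `θ = z d/dz` is a derivation
of `K` preserving `𝒪` and satisfying `θ(z^j) = j z^j`), a lattice `Λ = Σ 𝒪 e_i`, and
`∇_k = z^k D`, the `𝒪`-module `F^ℓ_k(Λ) = Λ + ∇_kΛ + ⋯ + ∇_k^ℓΛ` equals the `𝒪`-module
generated by `{ z^{jk} D^j e_i : 1 ≤ i ≤ n, 0 ≤ j ≤ ℓ }`. -/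
theorem stmt14 {V : Type*} [AddCommGroup V] [Module (LaurentSeries ℂ) V]
    [Module (PowerSeries ℂ) V] [IsScalarTower (PowerSeries ℂ) (LaurentSeries ℂ) V]
    (z : LaurentSeries ℂ)
    (hzdef : z = HahnSeries.ofPowerSeries ℤ ℂ PowerSeries.X)
    (θ : LaurentSeries ℂ → LaurentSeries ℂ)
    (hθadd : ∀ f g, θ (f + g) = θ f + θ g)
    (hθmul : ∀ f g, θ (f * g) = θ f * g + f * θ g)
    (hθz : ∀ j : ℤ, θ (z ^ j) = (j : ℤ) • z ^ j)
    (hθO : ∀ f : PowerSeries ℂ, ∃ g : PowerSeries ℂ,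
      θ (algebraMap (PowerSeries ℂ) (LaurentSeries ℂ) f)
        = algebraMap (PowerSeries ℂ) (LaurentSeries ℂ) g)
    (D : V → V)
    (hDadd : ∀ v w : V, D (v + w) = D v + D w)
    (hLeib : ∀ (f : LaurentSeries ℂ) (v : V), D (f • v) = θ f • v + f • D v)
    (n : ℕ) (e : Fin n → V) (k ℓ : ℕ) :
    Submodule.span (PowerSeries ℂ)
        {w : V | ∃ j ≤ ℓ, ∃ y ∈ Submodule.span (PowerSeries ℂ) (Set.range e),
          w = (fun y' => z ^ k • D y')^[j] y}
      = Submodule.span (PowerSeries ℂ)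
        {w : V | ∃ i : Fin n, ∃ j ≤ ℓ, w = z ^ (j * k) • D^[j] (e i)} := by
  set A := PowerSeries ℂ with hA
  set T : V → V := fun y' => z ^ k • D y' with hT
  -- z^k acts as the power series X^k
  have hzalg : z ^ k = algebraMap A (LaurentSeries ℂ) (PowerSeries.X ^ k) := by
    rw [map_pow, hzdef]; rfl
  have hsmulX : ∀ y : V, z ^ k • y = (PowerSeries.X ^ k : A) • y := by
    intro y; rw [hzalg, IsScalarTower.algebraMap_smul]
  -- D is additive, so D 0 = 0
  have hD0 : D 0 = 0 := by
    have := hDadd 0 0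
    simp only [add_zero] at this
    exact add_eq_left.mp this.symm
  have hTadd : ∀ a b : V, T (a + b) = T a + T b := by
    intro a b; simp only [hT, hDadd, smul_add]
  have hT0 : T 0 = 0 := by simp [hT, hD0]
  -- θ on natural powers of z
  have hθnat : ∀ m : ℕ, θ (z ^ m) = (m : ℤ) • z ^ m := by
    intro m
    have := hθz (m : ℤ)
    rwa [zpow_natCast] at this
  -- the key Leibniz computation
  have keyT : ∀ (m : ℕ) (w : V),
      T (z ^ m • w) = (m : ℤ) • (z ^ k • z ^ m • w) + z ^ k • z ^ m • D w := by
    intro m w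
    simp only [hT]
    rw [hLeib, hθnat, smul_add, smul_assoc, smul_comm (z ^ k) ((m : ℤ))]
  -- combining powers
  have hpow : ∀ (m : ℕ) (w : V), z ^ k • z ^ (m * k) • w = z ^ ((m + 1) * k) • w := by
    intro m w
    rw [smul_smul, ← pow_add]
    congr 2
    ring
  -- generic mapping lemma: T maps a span into a submodule as soon as it maps the
  -- generators there and the target contains the span
  have hTmap : ∀ (S : Set V) (M' : Submodule A V),
      Submodule.span A S ≤ M' → (∀ s ∈ S, T s ∈ M') →
      ∀ y ∈ Submodule.span A S, T y ∈ M' := by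
    intro S M' hle hgen y hy
    induction hy using Submodule.span_induction with
    | mem x hx => exact hgen x hx
    | zero => rw [hT0]; exact M'.zero_mem
    | add a b ha hb iha ihb => rw [hTadd]; exact M'.add_mem iha ihb
    | smul a x hx ih =>
      obtain ⟨g, hg⟩ := hθO a
      have heq : T (a • x) = g • (z ^ k • x) + a • T x := by
        simp only [hT]
        rw [← IsScalarTower.algebraMap_smul (LaurentSeries ℂ) a x, hLeib, hg, smul_add,
          smul_comm (z ^ k), smul_comm (z ^ k), IsScalarTower.algebraMap_smul,
          IsScalarTower.algebraMap_smul]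
      rw [heq]
      refine M'.add_mem (M'.smul_mem _ ?_) (M'.smul_mem _ ih)
      rw [hsmulX]
      exact hle (Submodule.smul_mem _ _ hx)
  -- the modules N j generated by the twisted iterates up to order j
  set N : ℕ → Submodule A V := fun j =>
    Submodule.span A {w : V | ∃ i : Fin n, ∃ m ≤ j, w = z ^ (m * k) • D^[m] (e i)} with hN
  have hNmono : ∀ {j j' : ℕ}, j ≤ j' → N j ≤ N j' := by
    intro j j' hjj'
    exact Submodule.span_mono (fun w ⟨i, m, hm, hw⟩ => ⟨i, m, le_trans hm hjj', hw⟩)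
  -- T maps N j into N (j+1)
  have hTN : ∀ j, ∀ y ∈ N j, T y ∈ N (j + 1) := by
    intro j
    refine hTmap _ _ (hNmono (Nat.le_succ j)) ?_
    rintro s ⟨i, m, hm, rfl⟩
    rw [keyT, hpow, hpow, ← Function.iterate_succ_apply' D]
    refine (N (j+1)).add_mem (zsmul_mem ?_ _) ?_
    · rw [← hpow, hsmulX]
      exact Submodule.smul_mem _ _
        (Submodule.subset_span ⟨i, m, le_trans hm (Nat.le_succ j), rfl⟩)
    · exact Submodule.subset_span ⟨i, m + 1, Nat.succ_le_succ hm, rfl⟩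
  -- the lattice is contained in N 0
  have hΛ : Submodule.span A (Set.range e) ≤ N 0 := by
    refine Submodule.span_le.mpr ?_
    rintro w ⟨i, rfl⟩
    exact Submodule.subset_span ⟨i, 0, le_refl 0, by simp⟩
  -- forward: iterates of T on the lattice land in N j
  have hfwd : ∀ j, ∀ y ∈ Submodule.span A (Set.range e), T^[j] y ∈ N j := by
    intro j
    induction j with
    | zero => intro y hy; exact hΛ hy
    | succ j ih =>
      intro y hy
      rw [Function.iterate_succ_apply' T]
      exact hTN j _ (ih y hy)
  -- backward: per basis vector, spans of T-iterates
  have hbwd : ∀ (i : Fin n) (j : ℕ),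
      z ^ (j * k) • D^[j] (e i) ∈
        Submodule.span A {w : V | ∃ m ≤ j, w = T^[m] (e i)} := by
    intro i j
    induction j with
    | zero =>
      refine Submodule.subset_span ⟨0, le_refl 0, ?_⟩
      simp
    | succ j ih =>
      set Q : ℕ → Submodule A V := fun j =>
        Submodule.span A {w : V | ∃ m ≤ j, w = T^[m] (e i)} with hQ
      have hQmono : Q j ≤ Q (j + 1) :=
        Submodule.span_mono (fun w ⟨m, hm, hw⟩ => ⟨m, le_trans hm (Nat.le_succ j), hw⟩)
      have hTQ : ∀ y ∈ Q j, T y ∈ Q (j + 1) := by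
        refine hTmap _ _ hQmono ?_
        rintro s ⟨m, hm, rfl⟩
        rw [← Function.iterate_succ_apply' T]
        exact Submodule.subset_span ⟨m + 1, Nat.succ_le_succ hm, rfl⟩
      have hkey := keyT (j * k) (D^[j] (e i))
      rw [hpow, hpow, ← Function.iterate_succ_apply' D] at hkey
      have : z ^ ((j + 1) * k) • D^[j + 1] (e i)
          = T (z ^ (j * k) • D^[j] (e i))
            - (↑(j * k) : ℤ) • ((PowerSeries.X ^ k : A) • (z ^ (j * k) • D^[j] (e i))) := by
        rw [← hsmulX, hpow, hkey]
        abel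
      rw [this]
      exact (Q (j + 1)).sub_mem (hTQ _ ih)
        (zsmul_mem (Submodule.smul_mem _ _ (hQmono ih)) _)
  -- conclude by antisymmetry
  apply le_antisymm
  · refine Submodule.span_le.mpr ?_
    rintro w ⟨j, hj, y, hy, rfl⟩
    exact hNmono hj (hfwd j y hy)
  · refine Submodule.span_le.mpr ?_
    rintro w ⟨i, j, hj, rfl⟩
    refine Submodule.span_le.mpr ?_ (hbwd i j)
    rintro w' ⟨m, hm, rfl⟩
    exact Submodule.subset_span
      ⟨m, le_trans hm hj, e i, Submodule.subset_span ⟨i, rfl⟩, rfl⟩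
end
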